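/- arXiv:1809.04514 — 3 statements merged into one kernel-verified Lean document; each statement's English description precedes it below -/
import Mathlib

section
/- A collection of POVMs E^{(1)}, …, E^{(g)} on ℂ^d is jointly measurable if and only if there exist m ∈ ℕ, a POVM M = (M_1, …, M_m) on ℂ^d, and conditional probabilities p_i(j|x) (i.e., p_i(j|x) ≥ 0 and Σ_j p_i(j|x) = 1 for each i, x) such that E^{(i)}_j = Σ_{x=1}^m p_i(j|x) M_x for all i ∈ [g] and j ∈ [k_i]. -/
open Matrix
open scoped ComplexOrder

lemma psd_smul {d : ℕ} {M : Matrix (Fin d) (Fin d) ℂ} (hM : M.PosSemidef)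
    {c : ℝ} (hc : 0 ≤ c) : ((c : ℂ) • M).PosSemidef := by
  constructor
  · unfold Matrix.IsHermitian
    rw [conjTranspose_smul, hM.1.eq]
    congr 1
    simp [Complex.ext_iff]
  · intro x
    exact (hM.smul (show (0 : ℂ) ≤ (c : ℂ) by exact_mod_cast hc)).2 x

lemma psd_sum {d : ℕ} {ι : Type*} (s : Finset ι) (f : ι → Matrix (Fin d) (Fin d) ℂ)
    (h : ∀ i ∈ s, (f i).PosSemidef) : (∑ i ∈ s, f i).PosSemidef := by
  classical
  induction s using Finset.induction with
  | empty => simpa using Matrix.PosSemidef.zero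
  | insert _ _ hx ih =>
    rw [Finset.sum_insert hx]
    exact (h _ (Finset.mem_insert_self _ _)).add
      (ih fun i hi => h i (Finset.mem_insert_of_mem hi))

lemma key_marginal {g m : ℕ} (k : Fin g → ℕ) (p : (i : Fin g) → Fin (k i) → Fin m → ℝ)
    (hp : ∀ i x, ∑ j, p i j x = 1) (u : Fin g) (v : Fin (k u)) (x : Fin m) :
    ∑ η ∈ Finset.univ.filter (fun η : ∀ i : Fin g, Fin (k i) => η u = v),
      ∏ i, p i (η i) x = p u v x := by
  classical
  set q : (i : Fin g) → Fin (k i) → ℝ :=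
    fun i j => if (i : ℕ) = (u : ℕ) then (if (j : ℕ) = (v : ℕ) then p i j x else 0)
      else p i j x with hq
  have h1 : ∑ η : ∀ i : Fin g, Fin (k i), ∏ i, q i (η i) = ∏ i, ∑ j, q i j :=
    (Fintype.prod_sum q).symm
  have h2 : ∏ i, ∑ j, q i j = p u v x := by
    rw [Fintype.prod_eq_single u]
    · have : ∀ j : Fin (k u), q u j = if j = v then p u v x else 0 := by
        intro j
        simp only [hq, if_pos rfl, Fin.val_eq_val]
        split_ifs with h
        · subst h; rfl
        · rfl
      simp [this]
    · intro i hi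
      have hi' : (i : ℕ) ≠ (u : ℕ) := fun h => hi (Fin.ext h)
      simp only [hq, if_neg hi']
      exact hp i x
  have h3 : ∑ η : ∀ i : Fin g, Fin (k i), ∏ i, q i (η i) =
      ∑ η ∈ Finset.univ.filter (fun η : ∀ i : Fin g, Fin (k i) => η u = v),
        ∏ i, p i (η i) x := by
    rw [← Finset.sum_filter_add_sum_filter_not Finset.univ
      (fun η : ∀ i : Fin g, Fin (k i) => η u = v) (fun η => ∏ i, q i (η i))]
    have e1 : ∀ η ∈ Finset.univ.filter (fun η : ∀ i : Fin g, Fin (k i) => η u = v),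
        ∏ i, q i (η i) = ∏ i, p i (η i) x := by
      intro η hη
      rw [Finset.mem_filter] at hη
      refine Finset.prod_congr rfl fun i _ => ?_
      simp only [hq]
      split_ifs with h1' h2'
      · rfl
      · exfalso
        have : i = u := Fin.ext h1'
        subst this
        exact h2' (by rw [hη.2])
      · rfl
    have e2 : ∀ η ∈ Finset.univ.filter (fun η : ∀ i : Fin g, Fin (k i) => ¬ η u = v),
        ∏ i, q i (η i) = 0 := by
      intro η hη
      rw [Finset.mem_filter] at hη
      refine Finset.prod_eq_zero (Finset.mem_univ u) ?_
      simp only [hq, if_pos rfl, Fin.val_eq_val]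
      exact if_neg hη.2
    rw [Finset.sum_congr rfl e1, Finset.sum_congr rfl e2, Finset.sum_const_zero, add_zero]
  rw [← h3, h1, h2]

def JointlyMeasurable {d g : ℕ} (k : Fin g → ℕ)
    (E : ∀ i : Fin g, Fin (k i) → Matrix (Fin d) (Fin d) ℂ) : Prop :=
  ∃ G : (∀ i : Fin g, Fin (k i)) → Matrix (Fin d) (Fin d) ℂ,
    (∀ η, (G η).PosSemidef) ∧ (∑ η, G η = 1) ∧
      ∀ (u : Fin g) (v : Fin (k u)),
        E u v = ∑ η ∈ Finset.univ.filter (fun η : ∀ i : Fin g, Fin (k i) => η u = v), G η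

/-- Joint measurability is equivalent to arising via post-processing (classical
conditional probabilities) from a single common POVM. -/
theorem stmt_6 {d g : ℕ} (k : Fin g → ℕ)
    (E : ∀ i : Fin g, Fin (k i) → Matrix (Fin d) (Fin d) ℂ)
    (hE : ∀ i, (∀ j, (E i j).PosSemidef) ∧ ∑ j, E i j = 1) :
    JointlyMeasurable k E ↔
      ∃ (m : ℕ) (M : Fin m → Matrix (Fin d) (Fin d) ℂ),
        (∀ x, (M x).PosSemidef) ∧ (∑ x, M x = 1) ∧
          ∃ p : (i : Fin g) → Fin (k i) → Fin m → ℝ,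
            (∀ i x, (∀ j, 0 ≤ p i j x) ∧ ∑ j, p i j x = 1) ∧
              ∀ i j, E i j = ∑ x, (p i j x : ℂ) • M x := by
  classical
  constructor
  · rintro ⟨G, hG1, hG2, hG3⟩
    refine ⟨Fintype.card (∀ i : Fin g, Fin (k i)),
      fun x => G ((Fintype.equivFin _).symm x), fun x => hG1 _, ?_, ?_⟩
    · rw [← hG2]
      exact Equiv.sum_comp (Fintype.equivFin _).symm G
    · refine ⟨fun i j x => if (Fintype.equivFin _).symm x i = j then 1 else 0,
        fun i x => ⟨fun j => by positivity, by simp⟩, fun i j => ?_⟩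
      rw [hG3 i j, Finset.sum_filter]
      rw [← Equiv.sum_comp (Fintype.equivFin (∀ i : Fin g, Fin (k i))).symm
        (fun η => if η i = j then G η else 0)]
      refine Finset.sum_congr rfl fun x _ => ?_
      by_cases h : (Fintype.equivFin (∀ i : Fin g, Fin (k i))).symm x i = j <;> simp [h]
  · rintro ⟨m, M, hMpsd, hMsum, p, hp, hEp⟩
    refine ⟨fun η => ∑ x, ((∏ i, p i (η i) x : ℝ) : ℂ) • M x, ?_, ?_, ?_⟩
    · intro η
      exact psd_sum _ _ fun x _ => psd_smul (hMpsd x)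
        (Finset.prod_nonneg fun i _ => (hp i x).1 _)
    · rw [Finset.sum_comm]
      calc ∑ x, ∑ η : ∀ i : Fin g, Fin (k i), ((∏ i, p i (η i) x : ℝ) : ℂ) • M x
          = ∑ x : Fin m, ((1 : ℝ) : ℂ) • M x := by
            refine Finset.sum_congr rfl fun x _ => ?_
            rw [← Finset.sum_smul]
            congr 1
            push_cast
            rw [← Fintype.prod_sum fun i j => ((p i j x : ℝ) : ℂ)]
            refine Finset.prod_eq_one fun i _ => ?_
            exact_mod_cast (hp i x).2
        _ = 1 := by simpa using hMsum
    · intro u v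
      rw [hEp u v, Finset.sum_comm]
      refine Finset.sum_congr rfl fun x _ => ?_
      rw [← Finset.sum_smul]
      congr 1
      norm_cast
      exact (key_marginal k p (fun i x => (hp i x).2) u v x).symm
end

section
/- Let g ≥ 1 and define the planar qubit observables X_j = cos(jπ/g)σ_X + sin(jπ/g)σ_Y for j ∈ [g], where σ_X, σ_Y are Pauli matrices. Then for λ ∈ ℝ, the tuple (λX_1, …, λX_g) satisfies all the inequalities Σ_{j=1}^g ε_j λ X_j ≤ I_2 for every ε ∈ {±1}^g if and only if |λ| ≤ sin(π/(2g)). -/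
open Matrix
open scoped ComplexOrder

noncomputable def sigmaX : Matrix (Fin 2) (Fin 2) ℂ := !![0, 1; 1, 0]

noncomputable def sigmaY : Matrix (Fin 2) (Fin 2) ℂ := !![0, -Complex.I; Complex.I, 0]

/-- The planar qubit observable `X_j = cos(jπ/g)σ_X + sin(jπ/g)σ_Y`, for `j ∈ [g]`
(here `j : Fin g` represents the integer `j+1 ∈ {1,…,g}`). -/
noncomputable def planarX (g : ℕ) (j : Fin g) : Matrix (Fin 2) (Fin 2) ℂ :=
  (Real.cos (((j : ℕ) + 1) * Real.pi / g) : ℂ) • sigmaX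
    + (Real.sin (((j : ℕ) + 1) * Real.pi / g) : ℂ) • sigmaY

section Aux

open Real intervalIntegral

lemma abs_cos_periodic : Function.Periodic (fun x => |Real.cos x|) Real.pi := by
  intro x
  simp [Real.cos_antiperiodic x, abs_neg]

lemma integral_abs_cos (c : ℝ) : ∫ x in c..(c + Real.pi), |Real.cos x| = 2 := by
  rw [abs_cos_periodic.intervalIntegral_add_eq c (-(Real.pi/2))]
  have h1 : -(Real.pi/2) + Real.pi = Real.pi/2 := by ring
  rw [h1]
  have h2 : ∫ x in (-(Real.pi/2))..(Real.pi/2), |Real.cos x| =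
      ∫ x in (-(Real.pi/2))..(Real.pi/2), Real.cos x := by
    apply intervalIntegral.integral_congr
    intro x hx
    rw [Set.uIcc_of_le (by linarith [Real.pi_pos]) ] at hx
    exact abs_of_nonneg (Real.cos_nonneg_of_mem_Icc hx)
  rw [h2, integral_cos]
  norm_num

lemma key_sum_bound (g : ℕ) (hg : 1 ≤ g) (φ : ℝ) :
    (∑ j ∈ Finset.range g, |Real.cos (((j : ℝ)+1)*Real.pi/g - φ)|)
      * (2 * Real.sin (Real.pi/(2*g))) ≤ 2 := by
  have hg0 : (0:ℝ) < g := by exact_mod_cast hg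
  set d : ℝ := Real.pi/(2*g) with hd
  set x : ℕ → ℝ := fun j => (2*j+1)*d - φ with hx
  have hterm : ∀ j ∈ Finset.range g,
      |Real.cos (((j : ℝ)+1)*Real.pi/g - φ)| * (2 * Real.sin d)
        = |Real.sin (x (j+1)) - Real.sin (x j)| := by
    intro j _
    have hds : Real.sin d ≥ 0 := by
      apply Real.sin_nonneg_of_nonneg_of_le_pi
      · positivity
      · have hg1 : (1:ℝ) ≤ g := by exact_mod_cast hg
        rw [hd, div_le_iff₀ (by positivity)]
        nlinarith [Real.pi_pos]
    rw [Real.sin_sub_sin]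
    have e1 : (x (j+1) - x j)/2 = d := by
      simp only [hx]; push_cast; ring
    have e2 : (x (j+1) + x j)/2 = ((j : ℝ)+1)*Real.pi/g - φ := by
      simp only [hx, hd]; push_cast; field_simp; ring
    rw [e1, e2, abs_mul, abs_mul]
    rw [abs_of_nonneg hds]
    norm_num; ring
  rw [Finset.sum_mul, Finset.sum_congr rfl hterm]
  have hmono : ∀ j : ℕ, x j ≤ x (j+1) := by
    intro j
    simp only [hx]
    have : (0:ℝ) ≤ d := by positivity
    push_cast; nlinarith
  have hstep : ∀ j ∈ Finset.range g,
      |Real.sin (x (j+1)) - Real.sin (x j)|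
        ≤ ∫ t in (x j)..(x (j+1)), |Real.cos t| := by
    intro j _
    have := intervalIntegral.abs_integral_le_integral_abs (f := Real.cos)
      (a := x j) (b := x (j+1)) (μ := MeasureTheory.volume) (hmono j)
    rwa [integral_cos] at this
  calc ∑ j ∈ Finset.range g, |Real.sin (x (j+1)) - Real.sin (x j)|
      ≤ ∑ j ∈ Finset.range g, ∫ t in (x j)..(x (j+1)), |Real.cos t| :=
        Finset.sum_le_sum hstep
    _ = ∫ t in (x 0)..(x g), |Real.cos t| := by
        apply intervalIntegral.sum_integral_adjacent_intervals
        intro k _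
        exact (Real.continuous_cos.abs).intervalIntegrable _ _
    _ = 2 := by
        have hxg : x g = x 0 + Real.pi := by
          simp only [hx, hd]; push_cast; field_simp; ring
        rw [hxg]; exact integral_abs_cos _

lemma sin_d_pos (g : ℕ) (hg : 1 ≤ g) : 0 < Real.sin (Real.pi/(2*g)) := by
  have hg0 : (0:ℝ) < g := by exact_mod_cast hg
  apply Real.sin_pos_of_pos_of_lt_pi
  · positivity
  · have hg1 : (1:ℝ) ≤ g := by exact_mod_cast hg
    rw [div_lt_iff₀ (by positivity)]
    nlinarith [Real.pi_pos]

lemma cos_sum_le (g : ℕ) (hg : 1 ≤ g) (φ : ℝ) :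
    ∑ j ∈ Finset.range g, |Real.cos (((j : ℝ)+1)*Real.pi/g - φ)|
      ≤ 1 / Real.sin (Real.pi/(2*g)) := by
  have hs := sin_d_pos g hg
  have := key_sum_bound g hg φ
  rw [le_div_iff₀ hs]
  nlinarith

lemma abs_signed_exp_sum_le (g : ℕ) (hg : 1 ≤ g) (ε : ℕ → ℝ) (hε : ∀ j, |ε j| ≤ 1) :
    ‖∑ j ∈ Finset.range g,
        (ε j : ℂ) * Complex.exp ((((j : ℝ)+1)*Real.pi/g : ℝ) * Complex.I)‖
      ≤ 1 / Real.sin (Real.pi/(2*g)) := by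
  have hs := sin_d_pos g hg
  set S : ℂ := ∑ j ∈ Finset.range g,
      (ε j : ℂ) * Complex.exp ((((j : ℝ)+1)*Real.pi/g : ℝ) * Complex.I) with hS
  rcases eq_or_ne S 0 with h0 | h0
  · rw [h0]; simp; positivity
  set a : ℝ := Complex.arg S with ha
  have hconj : (starRingEnd ℂ) S = (‖S‖ : ℂ) * Complex.exp ((-a : ℝ) * Complex.I) := by
    conv_lhs => rw [← Complex.norm_mul_exp_arg_mul_I S]
    rw [_root_.map_mul, Complex.conj_ofReal, ← Complex.exp_conj, _root_.map_mul, Complex.conj_ofReal,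
      Complex.conj_I]
    push_cast
    ring_nf
    rw [← ha, mul_comm Complex.I]
  have hre : ∀ θ : ℝ, ((starRingEnd ℂ) S * Complex.exp ((θ : ℝ) * Complex.I)).re
      = ‖S‖ * Real.cos (θ - a) := by
    intro θ
    rw [hconj, mul_assoc, ← Complex.exp_add]
    have : ((-a : ℝ) : ℂ) * Complex.I + (θ : ℂ) * Complex.I = ((θ - a : ℝ) : ℂ) * Complex.I := by
      push_cast; ring
    rw [this, Complex.re_ofReal_mul, Complex.exp_ofReal_mul_I_re]
  have hsq : (‖S‖)^2 = ∑ j ∈ Finset.range g,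
      ε j * (‖S‖ * Real.cos (((j : ℝ)+1)*Real.pi/g - a)) := by
    have h1 : (starRingEnd ℂ) S * S = ∑ j ∈ Finset.range g,
        (ε j : ℂ) * ((starRingEnd ℂ) S
          * Complex.exp ((((j : ℝ)+1)*Real.pi/g : ℝ) * Complex.I)) := by
      conv_lhs => rw [hS]
      rw [Finset.mul_sum]
      exact Finset.sum_congr rfl fun j _ => by ring
    have h2 : ((starRingEnd ℂ) S * S).re = (‖S‖)^2 := by
      rw [show (starRingEnd ℂ) S * S = S * (starRingEnd ℂ) S by ring, Complex.mul_conj,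
        Complex.sq_norm]
      simp
    rw [← h2, h1, Complex.re_sum]
    refine Finset.sum_congr rfl fun j _ => ?_
    rw [show ((ε j : ℂ) * ((starRingEnd ℂ) S
        * Complex.exp ((((j : ℝ)+1)*Real.pi/g : ℝ) * Complex.I))).re
      = ε j * ((starRingEnd ℂ) S
        * Complex.exp ((((j : ℝ)+1)*Real.pi/g : ℝ) * Complex.I)).re from by
        simp [Complex.mul_re]]
    rw [hre]
  have hbound : (‖S‖)^2 ≤ ‖S‖ * (1 / Real.sin (Real.pi/(2*g))) := by
    rw [hsq]
    calc ∑ j ∈ Finset.range g, ε j * (‖S‖ * Real.cos (((j : ℝ)+1)*Real.pi/g - a))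
        ≤ ∑ j ∈ Finset.range g, ‖S‖ * |Real.cos (((j : ℝ)+1)*Real.pi/g - a)| := by
          refine Finset.sum_le_sum fun j _ => ?_
          have h3 : ε j * (‖S‖ * Real.cos (((j : ℝ)+1)*Real.pi/g - a))
              ≤ |ε j * (‖S‖ * Real.cos (((j : ℝ)+1)*Real.pi/g - a))| := le_abs_self _
          refine h3.trans ?_
          rw [abs_mul, abs_mul, abs_of_nonneg (norm_nonneg S)]
          have := hε j
          have h4 : (0:ℝ) ≤ ‖S‖ * |Real.cos (((j : ℝ)+1)*Real.pi/g - a)| := by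
            positivity
          nlinarith [abs_nonneg (Real.cos (((j : ℝ)+1)*Real.pi/g - a)),
            norm_nonneg S, abs_nonneg (ε j)]
      _ = ‖S‖ * ∑ j ∈ Finset.range g, |Real.cos (((j : ℝ)+1)*Real.pi/g - a)| := by
          rw [Finset.mul_sum]
      _ ≤ ‖S‖ * (1 / Real.sin (Real.pi/(2*g))) := by
          exact mul_le_mul_of_nonneg_left (cos_sum_le g hg a) (norm_nonneg S)
  have hpos : 0 < ‖S‖ := by
    simpa [norm_pos_iff] using h0
  nlinarith

lemma abs_exp_sum_eq (g : ℕ) (hg : 1 ≤ g) :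
    ‖∑ j ∈ Finset.range g,
        Complex.exp ((((j : ℝ)+1)*Real.pi/g : ℝ) * Complex.I)‖
      * Real.sin (Real.pi/(2*g)) = 1 := by
  have hs := sin_d_pos g hg
  have hg0 : (0:ℝ) < g := by exact_mod_cast hg
  set z : ℂ := Complex.exp ((Real.pi/g : ℝ) * Complex.I) with hz
  have habsz : ‖z‖ = 1 := Complex.norm_exp_ofReal_mul_I _
  have hnormsq : Complex.normSq (z - 1) = 4 * Real.sin (Real.pi/(2*g))^2 := by
    have hre : z.re = Real.cos (Real.pi/g) := Complex.exp_ofReal_mul_I_re _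
    have him : z.im = Real.sin (Real.pi/g) := Complex.exp_ofReal_mul_I_im _
    have h2x : Real.pi/(g:ℝ) = 2 * (Real.pi/(2*g)) := by field_simp
    have hcos := Real.cos_two_mul (Real.pi/(2*(g:ℝ)))
    rw [h2x] at hre
    rw [h2x] at him
    have hpyth := Real.sin_sq_add_cos_sq (Real.pi/(2*(g:ℝ)))
    have hpyth2 := Real.sin_sq_add_cos_sq (2*(Real.pi/(2*(g:ℝ))))
    simp [Complex.normSq_apply, hre, him, Complex.sub_re, Complex.sub_im]
    nlinarith
  have hzne : z ≠ 1 := by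
    intro h
    rw [h] at hnormsq
    simp at hnormsq
    nlinarith
  have hzg : z ^ g = -1 := by
    rw [hz, ← Complex.exp_nat_mul]
    have hgc : (g:ℂ) ≠ 0 := Nat.cast_ne_zero.mpr (by omega)
    have : (g : ℂ) * ((Real.pi/g : ℝ) * Complex.I) = (Real.pi : ℝ) * Complex.I := by
      push_cast
      field_simp
    rw [this]
    simp [Complex.exp_pi_mul_I]
  have hC : (∑ j ∈ Finset.range g,
      Complex.exp ((((j : ℝ)+1)*Real.pi/g : ℝ) * Complex.I)) = z * ((-2) / (z - 1)) := by
    have hterm : ∀ j ∈ Finset.range g,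
        Complex.exp ((((j : ℝ)+1)*Real.pi/g : ℝ) * Complex.I) = z * z ^ j := by
      intro j _
      rw [hz, ← Complex.exp_nat_mul, ← Complex.exp_add]
      congr 1
      push_cast
      ring
    rw [Finset.sum_congr rfl hterm, ← Finset.mul_sum, geom_sum_eq hzne, hzg]
    congr 1
    rw [div_eq_div_iff (sub_ne_zero.mpr hzne) (sub_ne_zero.mpr hzne)]
    ring
  rw [hC, norm_mul, norm_div, habsz]
  have habs1 : ‖z - 1‖ = 2 * Real.sin (Real.pi/(2*g)) := by
    have h1 : ‖z-1‖ ^ 2 = (2 * Real.sin (Real.pi/(2*g)))^2 := by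
      rw [Complex.sq_norm, hnormsq]; ring
    have h2 := norm_nonneg (z - 1)
    nlinarith
  rw [habs1]
  simp only [norm_neg]
  rw [Complex.norm_two]
  field_simp
lemma psd_iff (a b : ℝ) :
    ((1 : Matrix (Fin 2) (Fin 2) ℂ) - ((a:ℂ) • sigmaX + (b:ℂ) • sigmaY)).PosSemidef
      ↔ a^2 + b^2 ≤ 1 := by
  set m : ℂ := -(a:ℂ) + (b:ℂ) * Complex.I with hm
  have hm2 : Complex.normSq m = a^2 + b^2 := by
    simp [hm, Complex.normSq_apply]
    ring
  have hM : (1 : Matrix (Fin 2) (Fin 2) ℂ) - ((a:ℂ) • sigmaX + (b:ℂ) • sigmaY)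
      = !![1, m; (starRingEnd ℂ) m, 1] := by
    ext i j
    fin_cases i <;> fin_cases j <;>
      simp [sigmaX, sigmaY, Matrix.one_apply, hm, Complex.ext_iff] <;> ring
  rw [hM]
  constructor
  · intro h
    have hq := h.dotProduct_mulVec_nonneg ![1, -(starRingEnd ℂ) m]
    have hql : star ![1, -(starRingEnd ℂ) m] ⬝ᵥ
        (!![1, m; (starRingEnd ℂ) m, 1] *ᵥ ![1, -(starRingEnd ℂ) m])
        = (((1 : ℝ) - (a^2+b^2) : ℝ) : ℂ) := by
      simp [dotProduct, Matrix.mulVec, Fin.sum_univ_two]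
      rw [Complex.mul_conj, hm2]
      push_cast
      ring
    rw [hql] at hq
    have := Complex.zero_le_real.mp hq
    linarith
  · intro h
    refine Matrix.PosSemidef.of_dotProduct_mulVec_nonneg ?_ ?_
    · unfold Matrix.IsHermitian
      ext i j
      fin_cases i <;> fin_cases j <;> simp [Matrix.conjTranspose_apply]
    · intro x
      set w : ℂ := (starRingEnd ℂ) (x 0) * m * x 1 with hw
      have e0 : (starRingEnd ℂ) (x 0) * x 0 = (Complex.normSq (x 0) : ℂ) := by
        rw [mul_comm, Complex.mul_conj]
      have e1 : (starRingEnd ℂ) (x 1) * x 1 = (Complex.normSq (x 1) : ℂ) := by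
        rw [mul_comm, Complex.mul_conj]
      have hexp : star x ⬝ᵥ (!![1, m; (starRingEnd ℂ) m, 1] *ᵥ x)
          = ((Complex.normSq (x 0) : ℂ) + (Complex.normSq (x 1) : ℂ))
            + (w + (starRingEnd ℂ) w) := by
        simp [dotProduct, Matrix.mulVec, Fin.sum_univ_two]
        rw [← e0, ← e1, hw, _root_.map_mul, _root_.map_mul, Complex.conj_conj]
        ring
      rw [hexp]
      have him : (((Complex.normSq (x 0) : ℂ) + (Complex.normSq (x 1) : ℂ))
          + (w + (starRingEnd ℂ) w)).im = 0 := by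
        simp [Complex.add_im, Complex.conj_im]
      have habsw : ‖w‖ ≤ ‖x 0‖ * ‖x 1‖ := by
        have hma : ‖m‖ ≤ 1 := by
          have hsq : ‖m‖ ^ 2 = a^2+b^2 := by rw [Complex.sq_norm, hm2]
          nlinarith [norm_nonneg m]
        rw [hw, norm_mul, norm_mul, Complex.norm_conj]
        have h0 := norm_nonneg (x 0)
        have h1' := norm_nonneg (x 1)
        calc ‖x 0‖ * ‖m‖ * ‖x 1‖
            = ‖m‖ * (‖x 0‖ * ‖x 1‖) := by ring
          _ ≤ 1 * (‖x 0‖ * ‖x 1‖) :=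
              mul_le_mul_of_nonneg_right hma (mul_nonneg h0 h1')
          _ = ‖x 0‖ * ‖x 1‖ := one_mul _
      have hre : 0 ≤ (((Complex.normSq (x 0) : ℂ) + (Complex.normSq (x 1) : ℂ))
          + (w + (starRingEnd ℂ) w)).re := by
        simp only [Complex.add_re, Complex.ofReal_re, Complex.conj_re]
        have h1 : -(2 * ‖w‖) ≤ w.re + w.re := by
          have := Complex.abs_re_le_norm w
          have := neg_abs_le w.re
          linarith
        have hn0 : Complex.normSq (x 0) = ‖x 0‖ ^ 2 := (Complex.sq_norm _).symm
        have hn1 : Complex.normSq (x 1) = ‖x 1‖ ^ 2 := (Complex.sq_norm _).symm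
        rw [hn0, hn1]
        nlinarith [sq_nonneg (‖x 0‖ - ‖x 1‖)]
      exact Complex.le_def.mpr ⟨by simpa using hre, by simpa using him⟩

lemma sum_planar (g : ℕ) (c : Fin g → ℝ) :
    ∑ j, ((c j : ℝ) : ℂ) • planarX g j
      = ((∑ j, c j * Real.cos (((j : ℕ) + 1) * Real.pi / g) : ℝ) : ℂ) • sigmaX
        + ((∑ j, c j * Real.sin (((j : ℕ) + 1) * Real.pi / g) : ℝ) : ℂ) • sigmaY := by
  have e : ∀ j : Fin g, ((c j : ℝ) : ℂ) • planarX g j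
      = ((c j * Real.cos (((j : ℕ) + 1) * Real.pi / g) : ℝ) : ℂ) • sigmaX
        + ((c j * Real.sin (((j : ℕ) + 1) * Real.pi / g) : ℝ) : ℂ) • sigmaY := by
    intro j
    rw [planarX, smul_add, smul_smul, smul_smul, Complex.ofReal_mul, Complex.ofReal_mul]
  rw [Finset.sum_congr rfl (fun j _ => e j), Finset.sum_add_distrib,
    Complex.ofReal_sum, Complex.ofReal_sum, Finset.sum_smul, Finset.sum_smul]

end Aux

/-- `(λX_1, …, λX_g)` satisfies all the matrix inequalities `∑ⱼ εⱼ λ Xⱼ ≤ I₂` for all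
sign vectors `ε ∈ {±1}^g` iff `|λ| ≤ sin(π/(2g))`. -/
theorem stmt_14 (g : ℕ) (hg : 1 ≤ g) (lam : ℝ) :
    (∀ ε : Fin g → ℝ, (∀ j, ε j = 1 ∨ ε j = -1) →
      ((1 : Matrix (Fin 2) (Fin 2) ℂ) - ∑ j, ((ε j * lam : ℝ) : ℂ) • planarX g j).PosSemidef)
      ↔ |lam| ≤ Real.sin (Real.pi / (2 * g)) := by
  have hs := sin_d_pos g hg
  -- reduction of each condition to a scalar inequality
  have hred : ∀ ε : Fin g → ℝ,
      ((1 : Matrix (Fin 2) (Fin 2) ℂ) - ∑ j, ((ε j * lam : ℝ) : ℂ) • planarX g j).PosSemidef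
      ↔ (∑ j, ε j * lam * Real.cos (((j : ℕ) + 1) * Real.pi / g))^2
        + (∑ j, ε j * lam * Real.sin (((j : ℕ) + 1) * Real.pi / g))^2 ≤ 1 := by
    intro ε
    rw [sum_planar g (fun j => ε j * lam)]
    exact psd_iff _ _
  constructor
  · intro h
    have h1 := (hred (fun _ => 1)).mp (h (fun _ => 1) (fun _ => Or.inl rfl))
    simp only [one_mul] at h1
    -- identify the sums with re/im of the exponential sum
    set C : ℂ := ∑ j ∈ Finset.range g,
        Complex.exp ((((j : ℝ)+1)*Real.pi/g : ℝ) * Complex.I) with hC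
    have hCre : C.re = ∑ j ∈ Finset.range g, Real.cos (((j : ℝ)+1)*Real.pi/g) := by
      rw [hC, Complex.re_sum]
      exact Finset.sum_congr rfl fun j _ => Complex.exp_ofReal_mul_I_re _
    have hCim : C.im = ∑ j ∈ Finset.range g, Real.sin (((j : ℝ)+1)*Real.pi/g) := by
      rw [hC, Complex.im_sum]
      exact Finset.sum_congr rfl fun j _ => Complex.exp_ofReal_mul_I_im _
    have hsc : (∑ j : Fin g, lam * Real.cos (((j : ℕ) + 1) * Real.pi / g)) = lam * C.re := by
      rw [hCre, Finset.mul_sum]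
      exact Fin.sum_univ_eq_sum_range (fun j => lam * Real.cos (((j : ℝ)+1)*Real.pi/g)) g
    have hss : (∑ j : Fin g, lam * Real.sin (((j : ℕ) + 1) * Real.pi / g)) = lam * C.im := by
      rw [hCim, Finset.mul_sum]
      exact Fin.sum_univ_eq_sum_range (fun j => lam * Real.sin (((j : ℝ)+1)*Real.pi/g)) g
    rw [hsc, hss] at h1
    have habs : ‖C‖ * Real.sin (Real.pi/(2*g)) = 1 := abs_exp_sum_eq g hg
    have hnsq : C.re^2 + C.im^2 = ‖C‖ ^ 2 := by
      rw [Complex.sq_norm, Complex.normSq_apply]; ring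
    -- lam^2 * |C|^2 ≤ 1 and |C| * s = 1
    have h2 : lam^2 * ‖C‖ ^ 2 ≤ 1 := by nlinarith
    by_contra hcon
    push_neg at hcon
    have hC0 : 0 ≤ ‖C‖ := norm_nonneg C
    have hCpos : 0 < ‖C‖ := by nlinarith
    have hlam2 : Real.sin (Real.pi/(2*g))^2 < lam^2 := by
      nlinarith [sq_abs lam, abs_nonneg lam]
    have h3 : Real.sin (Real.pi/(2*g))^2 * ‖C‖^2 = 1 := by nlinarith
    have h4 : Real.sin (Real.pi/(2*g))^2 * ‖C‖^2 < lam^2 * ‖C‖^2 :=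
      mul_lt_mul_of_pos_right hlam2 (pow_pos hCpos 2)
    linarith
  · intro h ε hε
    rw [hred ε]
    set ε' : ℕ → ℝ := fun j => if hj : j < g then ε ⟨j, hj⟩ else 1 with hε'
    have hε'1 : ∀ j, |ε' j| ≤ 1 := by
      intro j
      rw [hε']
      by_cases hj : j < g
      · simp only [dif_pos hj]
        rcases hε ⟨j, hj⟩ with h' | h' <;> rw [h'] <;> norm_num
      · simp [dif_neg hj]
    set S : ℂ := ∑ j ∈ Finset.range g,
        (ε' j : ℂ) * Complex.exp ((((j : ℝ)+1)*Real.pi/g : ℝ) * Complex.I) with hS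
    have hSabs := abs_signed_exp_sum_le g hg ε' hε'1
    have hSre : S.re = ∑ j ∈ Finset.range g, ε' j * Real.cos (((j : ℝ)+1)*Real.pi/g) := by
      rw [hS, Complex.re_sum]
      refine Finset.sum_congr rfl fun j _ => ?_
      rw [Complex.re_ofReal_mul, Complex.exp_ofReal_mul_I_re]
    have hSim : S.im = ∑ j ∈ Finset.range g, ε' j * Real.sin (((j : ℝ)+1)*Real.pi/g) := by
      rw [hS, Complex.im_sum]
      refine Finset.sum_congr rfl fun j _ => ?_
      rw [Complex.mul_im, Complex.exp_ofReal_mul_I_im, Complex.exp_ofReal_mul_I_re]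
      simp
    have hsc : (∑ j : Fin g, ε j * lam * Real.cos (((j : ℕ) + 1) * Real.pi / g))
        = lam * S.re := by
      rw [hSre, Finset.mul_sum]
      rw [← Fin.sum_univ_eq_sum_range
        (fun j => lam * (ε' j * Real.cos (((j : ℝ)+1)*Real.pi/g))) g]
      refine Finset.sum_congr rfl fun j _ => ?_
      rw [hε']
      simp only [Fin.is_lt, dif_pos, Fin.eta]
      ring
    have hss : (∑ j : Fin g, ε j * lam * Real.sin (((j : ℕ) + 1) * Real.pi / g))
        = lam * S.im := by
      rw [hSim, Finset.mul_sum]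
      rw [← Fin.sum_univ_eq_sum_range
        (fun j => lam * (ε' j * Real.sin (((j : ℝ)+1)*Real.pi/g))) g]
      refine Finset.sum_congr rfl fun j _ => ?_
      rw [hε']
      simp only [Fin.is_lt, dif_pos, Fin.eta]
      ring
    rw [hsc, hss]
    have hnsq : S.re^2 + S.im^2 = ‖S‖ ^ 2 := by
      rw [Complex.sq_norm, Complex.normSq_apply]; ring
    have habs2 : (lam * S.re)^2 + (lam * S.im)^2 = lam^2 * ‖S‖ ^2 := by
      rw [← hnsq]; ring
    rw [habs2]
    have hC0 : 0 ≤ ‖S‖ := norm_nonneg S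
    have hlam2 : lam^2 ≤ Real.sin (Real.pi/(2*g))^2 := by
      nlinarith [abs_nonneg lam, sq_abs lam]
    have hS2 : ‖S‖ ^ 2 ≤ (1 / Real.sin (Real.pi/(2*g)))^2 := by
      nlinarith
    calc lam^2 * ‖S‖ ^2
        ≤ Real.sin (Real.pi/(2*g))^2 * (1 / Real.sin (Real.pi/(2*g)))^2 := by
          apply mul_le_mul hlam2 hS2 (by positivity) (by positivity)
      _ = 1 := by field_simp
end

section
/- Let {G_η}_{η ∈ [k_1]×…×[k_g]} be a POVM on ℂ^d (G_η ≥ 0, Σ_η G_η = I) with marginals E^{(i)}_j = Σ_{η: η_i = j} G_η. Then for any tuple (X_{i,j}) of self-adjoint n×n matrices, i ∈ [g], j ∈ [k_i - 1], satisfying Σ_{i=1}^g Σ_{j=1}^{k_i-1} v^{(k_i)}_j(η_i) X_{i,j} ≤ I_n for every η ∈ [k_1]×…×[k_g] (where v^{(k)}_j(ε) = -2/k + 2δ_{ε,j}), it holds that Σ_{i=1}^g Σ_{j=1}^{k_i-1} (2E^{(i)}_j - (2/k_i)I_d) ⊗ X_{i,j} ≤ I_{dn}. -/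
open Matrix Kronecker
open scoped ComplexOrder

lemma kron_conjTranspose {l m p q : Type*} (A : Matrix l m ℂ) (B : Matrix p q ℂ) :
    (A ⊗ₖ B)ᴴ = Aᴴ ⊗ₖ Bᴴ := by
  ext ⟨i, j⟩ ⟨a, b⟩
  simp [kroneckerMap_apply, conjTranspose_apply, mul_comm]

lemma posSemidef_kron {m p : Type*} [Fintype m] [Fintype p] [DecidableEq m] [DecidableEq p]
    {A : Matrix m m ℂ} {B : Matrix p p ℂ}
    (hA : A.PosSemidef) (hB : B.PosSemidef) : (A ⊗ₖ B).PosSemidef := by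
  exact hA.kronecker hB

lemma posSemidef_sum {m ι : Type*} [Fintype m] (s : Finset ι)
    (f : ι → Matrix m m ℂ) (hf : ∀ i ∈ s, (f i).PosSemidef) :
    (∑ i ∈ s, f i).PosSemidef :=
  Finset.sum_induction f _ (fun _ _ ha hb => ha.add hb) Matrix.PosSemidef.zero hf

lemma sum_kron {l m p q ι : Type*} (s : Finset ι) (f : ι → Matrix l m ℂ)
    (B : Matrix p q ℂ) : (∑ i ∈ s, f i) ⊗ₖ B = ∑ i ∈ s, f i ⊗ₖ B := by
  classical
  induction s using Finset.induction with
  | empty => simp [Matrix.zero_kronecker]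
  | insert _ _ h ih => simp [Finset.sum_insert h, Matrix.add_kronecker, ih]

lemma kron_sum {l m p q ι : Type*} (s : Finset ι) (A : Matrix l m ℂ)
    (f : ι → Matrix p q ℂ) : A ⊗ₖ (∑ i ∈ s, f i) = ∑ i ∈ s, A ⊗ₖ f i := by
  classical
  induction s using Finset.induction with
  | empty => simp [Matrix.kronecker_zero]
  | insert _ _ h ih => simp [Finset.sum_insert h, Matrix.kronecker_add, ih]

lemma kron_sub {l m p q : Type*} (A : Matrix l m ℂ) (B C : Matrix p q ℂ) :
    A ⊗ₖ (B - C) = A ⊗ₖ B - A ⊗ₖ C := by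
  ext ⟨i, j⟩ ⟨a, b⟩
  simp [kroneckerMap_apply, mul_sub]

/-- If `{G_η}` is a POVM on `ℂ^d` indexed by `[k₁]×…×[k_g]` with marginals
`E⁽ⁱ⁾_j = ∑_{η : η_i = j} G_η`, then every element `X` of the matrix jewel
`D_{jewel,(k₁,…,k_g)}(n)` (i.e. satisfying the scalar inequalities indexed by `η`,
with `v⁽ᵏ⁾_j(ε) = -2/k + 2δ_{ε,j}`) satisfies
`∑ᵢ∑ⱼ (2E⁽ⁱ⁾_j - (2/kᵢ)I) ⊗ X_{i,j} ≤ I_{dn}`. -/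
theorem stmt_17 {d n g : ℕ} (k : Fin g → ℕ)
    (G : (∀ i : Fin g, Fin (k i)) → Matrix (Fin d) (Fin d) ℂ)
    (hGpos : ∀ η, (G η).PosSemidef) (hGsum : ∑ η, G η = 1)
    (X : ∀ i : Fin g, Fin (k i - 1) → Matrix (Fin n) (Fin n) ℂ)
    (hX : ∀ i j, (X i j).IsHermitian)
    (hwit : ∀ η : ∀ i : Fin g, Fin (k i),
      ((1 : Matrix (Fin n) (Fin n) ℂ)
        - ∑ i, ∑ j : Fin (k i - 1),
            (((-2 / (k i) + if ((η i : ℕ) = (j : ℕ)) then 2 else 0 : ℝ)) : ℂ) • X i j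
        ).PosSemidef) :
    ((1 : Matrix (Fin d × Fin n) (Fin d × Fin n) ℂ)
      - ∑ i, ∑ j : Fin (k i - 1),
          ((2 : ℂ) • (∑ η ∈ Finset.univ.filter
              (fun η : ∀ i : Fin g, Fin (k i) => (η i : ℕ) = (j : ℕ)), G η)
            - ((2 / (k i) : ℝ) : ℂ) • 1) ⊗ₖ X i j).PosSemidef := by
  classical
  set S : (∀ i : Fin g, Fin (k i)) → Matrix (Fin n) (Fin n) ℂ := fun η =>
    ∑ i, ∑ j : Fin (k i - 1),
      (((-2 / (k i) + if ((η i : ℕ) = (j : ℕ)) then 2 else 0 : ℝ)) : ℂ) • X i j with hS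
  have key : ∑ η, (G η) ⊗ₖ ((1 : Matrix (Fin n) (Fin n) ℂ) - S η)
      = (1 : Matrix (Fin d × Fin n) (Fin d × Fin n) ℂ)
        - ∑ i, ∑ j : Fin (k i - 1),
            ((2 : ℂ) • (∑ η ∈ Finset.univ.filter
                (fun η : ∀ i : Fin g, Fin (k i) => (η i : ℕ) = (j : ℕ)), G η)
              - ((2 / (k i) : ℝ) : ℂ) • 1) ⊗ₖ X i j := by
    have h1 : ∑ η, (G η) ⊗ₖ ((1 : Matrix (Fin n) (Fin n) ℂ) - S η)
        = ∑ η, ((G η) ⊗ₖ (1 : Matrix (Fin n) (Fin n) ℂ) - (G η) ⊗ₖ S η) :=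
      Finset.sum_congr rfl fun η _ => kron_sub _ _ _
    rw [h1, Finset.sum_sub_distrib, ← sum_kron, hGsum, Matrix.one_kronecker_one]
    congr 1
    have h2 : ∀ η, (G η) ⊗ₖ S η = ∑ i, ∑ j : Fin (k i - 1),
        ((((-2 / (k i) + if ((η i : ℕ) = (j : ℕ)) then 2 else 0 : ℝ)) : ℂ))
          • ((G η) ⊗ₖ X i j) := by
      intro η
      rw [hS]
      rw [kron_sum]
      refine Finset.sum_congr rfl fun i _ => ?_
      rw [kron_sum]
      exact Finset.sum_congr rfl fun j _ => Matrix.kronecker_smul _ _ _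
    simp_rw [h2]
    rw [Finset.sum_comm]
    refine Finset.sum_congr rfl fun i _ => ?_
    rw [Finset.sum_comm]
    refine Finset.sum_congr rfl fun j _ => ?_
    have hM : (2 : ℂ) • (∑ η ∈ Finset.univ.filter
            (fun η : ∀ i : Fin g, Fin (k i) => (η i : ℕ) = (j : ℕ)), G η)
          - ((2 / (k i) : ℝ) : ℂ) • 1
        = ∑ η, ((((-2 / (k i) + if ((η i : ℕ) = (j : ℕ)) then 2 else 0 : ℝ)) : ℂ)) • G η := by
      have hcast : ∀ η : ∀ i : Fin g, Fin (k i),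
          (((-2 / (k i) + if ((η i : ℕ) = (j : ℕ)) then 2 else 0 : ℝ)) : ℂ)
            = (if ((η i : ℕ) = (j : ℕ)) then (2 : ℂ) else 0) - ((2 / (k i) : ℝ) : ℂ) := by
        intro η; split <;> push_cast <;> ring
      simp_rw [hcast, sub_smul, Finset.sum_sub_distrib, ite_smul, zero_smul,
        ← Finset.sum_filter, ← Finset.smul_sum, hGsum]
    rw [hM, sum_kron]
    exact Finset.sum_congr rfl fun η _ => (Matrix.smul_kronecker _ _ _).symm
  rw [← key]
  exact posSemidef_sum _ _ (fun η _ => posSemidef_kron (hGpos η) (hwit η))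
end
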